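/- The function G_{1/2}(y) = 4·(log((√(1 + ρy + y²/4) − ρ − y/2)/(1 − ρ)))² has Taylor expansion G_{1/2}(y) = y² − (ρ/2)·y³ + (1/48)·(15ρ² − 4)·y⁴ + O(y⁵) around y = 0. -/

import Mathlib

open Asymptotics Filter

private lemma sabr_auxMul (k : ℕ) {g : ℝ → ℝ} (hg : ContinuousAt g 0) :
    (fun y : ℝ => y ^ k * g y) =O[nhds 0] fun y => y ^ k := by
  simpa using (isBigO_refl (fun y : ℝ => y ^ k) (nhds 0)).mul (hg.tendsto.isBigO_one ℝ)

private lemma sabr_key {p q : ℝ → ℝ} (k : ℕ) (hq : ContinuousAt q 0)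
    (hpq : ∀ y, p y = y ^ k * q y) : p =O[nhds 0] fun y => y ^ k :=
  (sabr_auxMul k hq).congr_left fun y => (hpq y).symm

private lemma sabr_auxLe {k m : ℕ} (h : k ≤ m) :
    (fun y : ℝ => y ^ m) =O[nhds 0] fun y : ℝ => y ^ k := by
  have h1 : (fun y : ℝ => y ^ k * y ^ (m - k)) =O[nhds 0] fun y => y ^ k :=
    sabr_auxMul k (by fun_prop)
  simpa [← pow_add, Nat.add_sub_cancel' h] using h1

set_option maxHeartbeats 2000000 in
/-- Taylor expansion of G_{1/2}(y) = 4·(log((√(1+ρy+y²/4) − ρ − y/2)/(1−ρ)))²: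
G_{1/2}(y) = y² − (ρ/2)y³ + (1/48)(15ρ² − 4)y⁴ + O(y⁵) around y = 0. -/
theorem sabr_Ghalf_taylor (ρ : ℝ) (hρ : ρ ∈ Set.Ioo (-1 : ℝ) 1) (G : ℝ → ℝ)
    (hG : ∀ y, G y =
      4 * (Real.log ((Real.sqrt (1 + ρ * y + y ^ 2 / 4) - ρ - y / 2) / (1 - ρ))) ^ 2) :
    (fun y => G y - (y ^ 2 - ρ / 2 * y ^ 3 + (1 / 48) * (15 * ρ ^ 2 - 4) * y ^ 4))
      =O[nhds 0] fun y => y ^ 5 := by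
  obtain ⟨hρ1, hρ2⟩ := hρ
  have h1ρ : (0:ℝ) < 1 - ρ := by linarith
  set s : ℝ → ℝ := fun y => 1 + ρ * y + y ^ 2 / 4 with hs_def
  set S : ℝ → ℝ := fun y => Real.sqrt (s y) with hS_def
  set v : ℝ → ℝ := fun y => (S y - ρ - y / 2) / (1 - ρ) - 1 with hv_def
  set PS : ℝ → ℝ := fun y : ℝ => (1:ℝ) + (1/2:ℝ) * ρ^1 * y^1 + (1/8:ℝ) * y^2 + (-1/8:ℝ) * ρ^2 * y^2 + (-1/16:ℝ) * ρ^1 * y^3 + (1/16:ℝ) * ρ^3 * y^3 + (-1/128:ℝ) * y^4 + (3/64:ℝ) * ρ^2 * y^4 + (-5/128:ℝ) * ρ^4 * y^4 with hPS_def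
  set pv : ℝ → ℝ := fun y : ℝ => (-1/2:ℝ) * y^1 + (1/8:ℝ) * y^2 + (1/8:ℝ) * ρ^1 * y^2 + (-1/16:ℝ) * ρ^1 * y^3 + (-1/16:ℝ) * ρ^2 * y^3 + (-1/128:ℝ) * y^4 + (-1/128:ℝ) * ρ^1 * y^4 + (5/128:ℝ) * ρ^2 * y^4 + (5/128:ℝ) * ρ^3 * y^4 with hpv_def
  set pv2 : ℝ → ℝ := fun y : ℝ => (-1/2:ℝ) * y^1 + (1/8:ℝ) * y^2 + (1/8:ℝ) * ρ^1 * y^2 + (-1/16:ℝ) * ρ^1 * y^3 + (-1/16:ℝ) * ρ^2 * y^3 with hpv2_def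
  set pv3 : ℝ → ℝ := fun y : ℝ => (-1/2:ℝ) * y^1 + (1/8:ℝ) * y^2 + (1/8:ℝ) * ρ^1 * y^2 with hpv3_def
  set pv4 : ℝ → ℝ := fun y : ℝ => (-1/2:ℝ) * y^1 with hpv4_def
  set Pf : ℝ → ℝ := fun y : ℝ => (-1/2:ℝ) * y^1 + (1/8:ℝ) * ρ^1 * y^2 + (1/48:ℝ) * y^3 + (-1/16:ℝ) * ρ^2 * y^3 + (-3/128:ℝ) * ρ^1 * y^4 + (5/128:ℝ) * ρ^3 * y^4 with hPf_def
  -- continuity and values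
  have hscont : Continuous s := by rw [hs_def]; fun_prop
  have hScont : Continuous S := by rw [hS_def]; exact Real.continuous_sqrt.comp hscont
  have hvcont : Continuous v := by
    rw [hv_def]; exact ((hScont.sub continuous_const).sub (by fun_prop)).div_const _ |>.sub
      continuous_const
  have hPScont : Continuous PS := by rw [hPS_def]; fun_prop
  have hs0 : s 0 = 1 := by rw [hs_def]; norm_num
  have hS0 : S 0 = 1 := by rw [hS_def]; simp [hs0]
  have hv0 : v 0 = 0 := by
    rw [hv_def]; simp only [hS0]; rw [show (1:ℝ) - ρ - 0/2 = 1 - ρ by ring, div_self h1ρ.ne']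
    ring
  have hPS0 : PS 0 = 1 := by rw [hPS_def]; norm_num
  -- eventual facts
  have hvt : Tendsto v (nhds 0) (nhds 0) := by
    have := hvcont.tendsto 0
    rwa [hv0] at this
  have hvabs : Tendsto (fun y => |v y|) (nhds 0) (nhds 0) := by simpa using hvt.abs
  have hev_v : ∀ᶠ y in nhds (0:ℝ), |v y| < 1/2 :=
    hvabs.eventually_lt_const (by norm_num)
  have hsumt : Tendsto (fun y => S y + PS y) (nhds 0) (nhds 2) := by
    have := (hScont.add hPScont).tendsto 0
    rw [Pi.add_apply, hS0, hPS0] at this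
    norm_num at this
    exact this
  have hev_sum : ∀ᶠ y in nhds (0:ℝ), 1 < S y + PS y :=
    hsumt.eventually_const_lt (by norm_num)
  have hev_s : ∀ᶠ y in nhds (0:ℝ), 0 < s y :=
    (hs0 ▸ hscont.tendsto 0).eventually_const_lt (by norm_num)
  -- remainder polynomials
  set R1 : ℝ → ℝ := fun y : ℝ => (3/128:ℝ) * ρ^1 + (-5/64:ℝ) * ρ^3 + (7/128:ℝ) * ρ^5 + (1/512:ℝ) * y^1 + (-9/512:ℝ) * ρ^2 * y^1 + (15/512:ℝ) * ρ^4 * y^1 + (-7/512:ℝ) * ρ^6 * y^1 + (-1/1024:ℝ) * ρ^1 * y^2 + (7/1024:ℝ) * ρ^3 * y^2 + (-11/1024:ℝ) * ρ^5 * y^2 + (5/1024:ℝ) * ρ^7 * y^2 + (-1/16384:ℝ) * y^3 + (3/4096:ℝ) * ρ^2 * y^3 + (-23/8192:ℝ) * ρ^4 * y^3 + (15/4096:ℝ) * ρ^6 * y^3 + (-25/16384:ℝ) * ρ^8 * y^3 with hR1_def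
  have hR1cont : Continuous R1 := by rw [hR1_def]; fun_prop
  -- Step 1: sqrt expansion
  have hkey : ∀ᶠ y in nhds (0:ℝ), S y - PS y = y ^ 5 * (R1 y / (S y + PS y)) := by
    filter_upwards [hev_sum, hev_s] with y hy hsy
    have hS2 : S y ^ 2 = s y := by rw [hS_def]; exact Real.sq_sqrt hsy.le
    have hne : S y + PS y ≠ 0 := by linarith
    rw [← mul_div_assoc, eq_div_iff hne]
    have h2 : (S y - PS y) * (S y + PS y) = s y - PS y ^ 2 := by rw [← hS2]; ring
    rw [h2]
    rw [hs_def, hPS_def, hR1_def]; ring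
  have hdivcont : ContinuousAt (fun y => R1 y / (S y + PS y)) 0 := by
    apply ContinuousAt.div hR1cont.continuousAt ((hScont.add hPScont).continuousAt)
    rw [Pi.add_apply, hS0, hPS0]; norm_num
  have hS5 : (fun y => S y - PS y) =O[nhds 0] fun y => y ^ 5 :=
    (sabr_auxMul 5 hdivcont).congr' (EventuallyEq.symm hkey) EventuallyEq.rfl
  -- Step 2: v - pv
  have hv5 : (fun y => v y - pv y) =O[nhds 0] fun y => y ^ 5 := by
    have heq : ∀ y, v y - pv y = (1 - ρ)⁻¹ * (S y - PS y) := by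
      intro y
      rw [hv_def, hpv_def, hPS_def]
      field_simp
      ring
    exact (hS5.const_mul_left _).congr_left fun y => (heq y).symm
  -- polynomial big-O facts
  have hpvO : (fun y => pv y) =O[nhds 0] fun y => y ^ 1 :=
    sabr_key 1 (q := fun y : ℝ => (-1/2:ℝ) + (1/8:ℝ) * y^1 + (1/8:ℝ) * ρ^1 * y^1 + (-1/16:ℝ) * ρ^1 * y^2 + (-1/16:ℝ) * ρ^2 * y^2 + (-1/128:ℝ) * y^3 + (-1/128:ℝ) * ρ^1 * y^3 + (5/128:ℝ) * ρ^2 * y^3 + (5/128:ℝ) * ρ^3 * y^3) (by fun_prop)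
      (fun y => by rw [hpv_def]; ring)
  have hpv2O : (fun y => pv2 y) =O[nhds 0] fun y => y ^ 1 :=
    sabr_key 1 (q := fun y : ℝ => (-1/2:ℝ) + (1/8:ℝ) * y^1 + (1/8:ℝ) * ρ^1 * y^1 + (-1/16:ℝ) * ρ^1 * y^2 + (-1/16:ℝ) * ρ^2 * y^2) (by fun_prop)
      (fun y => by rw [hpv2_def]; ring)
  have hpv3O : (fun y => pv3 y) =O[nhds 0] fun y => y ^ 1 :=
    sabr_key 1 (q := fun y : ℝ => (-1/2:ℝ) + (1/8:ℝ) * y^1 + (1/8:ℝ) * ρ^1 * y^1) (by fun_prop)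
      (fun y => by rw [hpv3_def]; ring)
  have hpv4O : (fun y => pv4 y) =O[nhds 0] fun y => y ^ 1 :=
    sabr_key 1 (q := fun _ : ℝ => (-1/2:ℝ)) (by fun_prop)
      (fun y => by rw [hpv4_def]; ring)
  have hPfO : (fun y => Pf y) =O[nhds 0] fun y => y ^ 1 :=
    sabr_key 1 (q := fun y : ℝ => (-1/2:ℝ) + (1/8:ℝ) * ρ^1 * y^1 + (1/48:ℝ) * y^2 + (-1/16:ℝ) * ρ^2 * y^2 + (-3/128:ℝ) * ρ^1 * y^3 + (5/128:ℝ) * ρ^3 * y^3) (by fun_prop)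
      (fun y => by rw [hPf_def]; ring)
  have hd2p : (fun y => pv y - pv2 y) =O[nhds 0] fun y => y ^ 4 :=
    sabr_key 4 (q := fun _ : ℝ => (-1/128:ℝ) + (-1/128:ℝ) * ρ^1 + (5/128:ℝ) * ρ^2 + (5/128:ℝ) * ρ^3) (by fun_prop)
      (fun y => by rw [hpv_def, hpv2_def]; ring)
  have hd3p : (fun y => pv y - pv3 y) =O[nhds 0] fun y => y ^ 3 :=
    sabr_key 3 (q := fun y : ℝ => (-1/16:ℝ) * ρ^1 + (-1/16:ℝ) * ρ^2 + (-1/128:ℝ) * y^1 + (-1/128:ℝ) * ρ^1 * y^1 + (5/128:ℝ) * ρ^2 * y^1 + (5/128:ℝ) * ρ^3 * y^1) (by fun_prop)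
      (fun y => by rw [hpv_def, hpv3_def]; ring)
  have hd4p : (fun y => pv y - pv4 y) =O[nhds 0] fun y => y ^ 2 :=
    sabr_key 2 (q := fun y : ℝ => (1/8:ℝ) + (1/8:ℝ) * ρ^1 + (-1/16:ℝ) * ρ^1 * y^1 + (-1/16:ℝ) * ρ^2 * y^1 + (-1/128:ℝ) * y^2 + (-1/128:ℝ) * ρ^1 * y^2 + (5/128:ℝ) * ρ^2 * y^2 + (5/128:ℝ) * ρ^3 * y^2) (by fun_prop)
      (fun y => by rw [hpv_def, hpv4_def]; ring)
  -- v = O(y)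
  have hv1 : (fun y => v y) =O[nhds 0] fun y => y ^ 1 := by
    have := (hv5.trans (sabr_auxLe (by norm_num))).add hpvO
    exact this.congr_left fun y => by ring
  -- differences of powers
  have hd2 : (fun y => v y - pv2 y) =O[nhds 0] fun y => y ^ 4 := by
    have := (hv5.trans (sabr_auxLe (by norm_num))).add hd2p
    exact this.congr_left fun y => by ring
  have hd3 : (fun y => v y - pv3 y) =O[nhds 0] fun y => y ^ 3 := by
    have := (hv5.trans (sabr_auxLe (by norm_num))).add hd3p
    exact this.congr_left fun y => by ring
  have hd4 : (fun y => v y - pv4 y) =O[nhds 0] fun y => y ^ 2 := by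
    have := (hv5.trans (sabr_auxLe (by norm_num))).add hd4p
    exact this.congr_left fun y => by ring
  have hA2 : (fun y => v y ^ 2 - pv2 y ^ 2) =O[nhds 0] fun y => y ^ 5 := by
    have := hd2.mul (hv1.add hpv2O)
    exact this.congr (fun y => by ring) (fun y => by ring)
  have hA3 : (fun y => v y ^ 3 - pv3 y ^ 3) =O[nhds 0] fun y => y ^ 5 := by
    have hq3 : (fun y => v y ^ 2 + v y * pv3 y + pv3 y ^ 2) =O[nhds 0] fun y => y ^ 2 := by
      have h1 := (hv1.mul hv1).add (hv1.mul hpv3O)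
      have h2 := h1.add (hpv3O.mul hpv3O)
      exact h2.congr (fun y => by ring) (fun y => by ring)
    exact (hd3.mul hq3).congr (fun y => by ring) (fun y => by ring)
  have hA4 : (fun y => v y ^ 4 - pv4 y ^ 4) =O[nhds 0] fun y => y ^ 5 := by
    have hq4 : (fun y => v y ^ 3 + v y ^ 2 * pv4 y + v y * pv4 y ^ 2 + pv4 y ^ 3)
        =O[nhds 0] fun y => y ^ 3 := by
      have h1 := ((hv1.mul hv1).mul hv1).add (((hv1.mul hv1).mul hpv4O))
      have h2 := h1.add ((hv1.mul hpv4O).mul hpv4O)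
      have h3 := h2.add ((hpv4O.mul hpv4O).mul hpv4O)
      exact h3.congr (fun y => by ring) (fun y => by ring)
    exact (hd4.mul hq4).congr (fun y => by ring) (fun y => by ring)
  -- log expansion
  have hlog5 : (fun y => Real.log (1 + v y) - (v y - v y ^ 2 / 2 + v y ^ 3 / 3 - v y ^ 4 / 4))
      =O[nhds 0] fun y => y ^ 5 := by
    have hbase : (fun y => Real.log (1 + v y) - (v y - v y ^ 2 / 2 + v y ^ 3 / 3 - v y ^ 4 / 4))
        =O[nhds 0] fun y => v y ^ 5 := by
      apply IsBigO.of_bound 2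
      filter_upwards [hev_v] with y hy
      have h1 : |(-v y)| < 1 := by rw [abs_neg]; linarith
      have hb := Real.abs_log_sub_add_sum_range_le h1 4
      have hsum : (∑ i ∈ Finset.range 4, (-v y) ^ (i + 1) / (i + 1))
          = -(v y) + v y ^ 2 / 2 - v y ^ 3 / 3 + v y ^ 4 / 4 := by
        rw [Finset.sum_range_succ, Finset.sum_range_succ, Finset.sum_range_succ,
          Finset.sum_range_succ, Finset.sum_range_zero]
        push_cast
        ring
      rw [hsum] at hb
      have hlg : Real.log (1 - -v y) = Real.log (1 + v y) := by ring_nf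
      rw [hlg, abs_neg] at hb
      have habs : |(-(v y) + v y ^ 2 / 2 - v y ^ 3 / 3 + v y ^ 4 / 4) + Real.log (1 + v y)|
          = |Real.log (1 + v y) - (v y - v y ^ 2 / 2 + v y ^ 3 / 3 - v y ^ 4 / 4)| := by
        congr 1
        ring
      rw [habs] at hb
      have hden : (1:ℝ)/2 ≤ 1 - |v y| := by linarith
      have hvnn : (0:ℝ) ≤ |v y| := abs_nonneg _
      have h5 : |v y| ^ 5 / (1 - |v y|) ≤ 2 * |v y| ^ 5 := by
        rw [div_le_iff₀ (by linarith)]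
        nlinarith [pow_nonneg hvnn 5]
      calc ‖Real.log (1 + v y) - (v y - v y ^ 2 / 2 + v y ^ 3 / 3 - v y ^ 4 / 4)‖
          ≤ |v y| ^ 5 / (1 - |v y|) := hb
        _ ≤ 2 * |v y| ^ 5 := h5
        _ = 2 * ‖v y ^ 5‖ := by rw [Real.norm_eq_abs, abs_pow]
    have hvp : (fun y => v y ^ 5) =O[nhds 0] fun y => y ^ 5 :=
      (hv1.pow 5).congr_right fun y => by ring
    exact hbase.trans hvp
  -- truncation of the quartic in v
  have hpoly : (fun y => pv y - pv2 y ^ 2 / 2 + pv3 y ^ 3 / 3 - pv4 y ^ 4 / 4 - Pf y)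
      =O[nhds 0] fun y => y ^ 5 :=
    sabr_key 5 (q := fun y : ℝ => (-1/128:ℝ) + (-1/128:ℝ) * ρ^1 + (1/128:ℝ) * ρ^2 + (1/128:ℝ) * ρ^3 + (1/1536:ℝ) * y^1 + (1/512:ℝ) * ρ^1 * y^1 + (-5/1536:ℝ) * ρ^3 * y^1 + (-1/512:ℝ) * ρ^4 * y^1) (by fun_prop)
      (fun y => by rw [hpv_def, hpv2_def, hpv3_def, hpv4_def, hPf_def]; ring)
  have hE : (fun y => (v y - v y ^ 2 / 2 + v y ^ 3 / 3 - v y ^ 4 / 4) - Pf y)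
      =O[nhds 0] fun y => y ^ 5 := by
    have h1 := hv5.add (hA2.const_mul_left (-(1:ℝ)/2))
    have h2 := h1.add (hA3.const_mul_left ((1:ℝ)/3))
    have h3 := h2.add (hA4.const_mul_left (-(1:ℝ)/4))
    have h4 := h3.add hpoly
    exact h4.congr_left fun y => by ring
  have hf5 : (fun y => Real.log (1 + v y) - Pf y) =O[nhds 0] fun y => y ^ 5 :=
    (hlog5.add hE).congr_left fun y => by ring
  have hfO : (fun y => Real.log (1 + v y)) =O[nhds 0] fun y => y ^ 1 := by
    have := (hf5.trans (sabr_auxLe (by norm_num))).add hPfO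
    exact this.congr_left fun y => by ring
  -- final assembly
  have hprod : (fun y => (Real.log (1 + v y) - Pf y) * (Real.log (1 + v y) + Pf y))
      =O[nhds 0] fun y => y ^ 5 := by
    have := hf5.mul (hfO.add hPfO)
    have h6 : (fun y => (Real.log (1 + v y) - Pf y)
        * (Real.log (1 + v y) + Pf y)) =O[nhds 0] fun y : ℝ => y ^ 6 :=
      this.congr (fun y => by ring) (fun y => by ring)
    exact h6.trans (sabr_auxLe (by norm_num))
  have hfinal_poly : (fun y => 4 * Pf y ^ 2
      - (y ^ 2 - ρ / 2 * y ^ 3 + (1 / 48) * (15 * ρ ^ 2 - 4) * y ^ 4))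
      =O[nhds 0] fun y => y ^ 5 :=
    sabr_key 5 (q := fun y : ℝ => (11/96:ℝ) * ρ^1 + (-7/32:ℝ) * ρ^3 + (1/576:ℝ) * y^1 + (-13/384:ℝ) * ρ^2 * y^1 + (7/128:ℝ) * ρ^4 * y^1 + (-1/256:ℝ) * ρ^1 * y^2 + (7/384:ℝ) * ρ^3 * y^2 + (-5/256:ℝ) * ρ^5 * y^2 + (9/4096:ℝ) * ρ^2 * y^3 + (-15/2048:ℝ) * ρ^4 * y^3 + (25/4096:ℝ) * ρ^6 * y^3) (by fun_prop)
      (fun y => by rw [hPf_def]; ring)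
  have hGy : ∀ y, G y - (y ^ 2 - ρ / 2 * y ^ 3 + (1 / 48) * (15 * ρ ^ 2 - 4) * y ^ 4)
      = 4 * ((Real.log (1 + v y) - Pf y) * (Real.log (1 + v y) + Pf y))
        + (4 * Pf y ^ 2 - (y ^ 2 - ρ / 2 * y ^ 3 + (1 / 48) * (15 * ρ ^ 2 - 4) * y ^ 4)) := by
    intro y
    have harg : (Real.sqrt (1 + ρ * y + y ^ 2 / 4) - ρ - y / 2) / (1 - ρ) = 1 + v y := by
      rw [hv_def, hS_def, hs_def]
      ring
    rw [hG y, harg]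
    ring
  exact ((hprod.const_mul_left 4).add hfinal_poly).congr_left fun y => (hGy y).symm
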